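/- Assume p_{i+} > 0 for every row i. Let t be an integer with 2 ≤ t < c and S_t(p_{+·}) ≠ 1. Suppose the quasi-independence condition S_k(p_{i·}) = p_{i+} · S_k(p_{+·}) holds for every row i and every integer k with 1 ≤ k ≤ t − 1. If λ^{K(t)}_{Y|X} = 0, then S_t(p_{i·}) = p_{i+} · S_t(p_{+·}) for every row i (equivalently, the t-th largest entry of each row i equals p_{i+} times the t-th largest column marginal). -/

import Mathlib

/-- `Smax t q` : the maximum, over subsets `T` of the index type with `T.card = t`,
of `∑ j ∈ T, q j` (i.e. the sum of the `t` largest entries of `q`). -/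
noncomputable def Smax {n : ℕ} (t : ℕ) (q : Fin n → ℝ) : ℝ :=
  sSup ((fun T : Finset (Fin n) => ∑ j ∈ T, q j) '' {T : Finset (Fin n) | T.card = t})

/-- Row marginals `p_{i+}`. -/
noncomputable def rowMarg {r c : ℕ} (p : Fin r → Fin c → ℝ) : Fin r → ℝ :=
  fun i => ∑ j, p i j

/-- Column marginals `p_{+j}`. -/
noncomputable def colMarg {r c : ℕ} (p : Fin r → Fin c → ℝ) : Fin c → ℝ :=
  fun j => ∑ i, p i j

/-- The measure `λ^{(t)}_{Y|X}` based on multi-categorical proportional reduction in error. -/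
noncomputable def lambdaT {r c : ℕ} (t : ℕ) (p : Fin r → Fin c → ℝ) : ℝ :=
  (∑ i, Smax t (p i) - Smax t (colMarg p)) / (1 - Smax t (colMarg p))

/-- The alternative measure `λ^{K(t)}_{Y|X}`. -/
noncomputable def lambdaKT {r c : ℕ} (t : ℕ) (p : Fin r → Fin c → ℝ) : ℝ :=
  (Real.sqrt (∑ i, (Smax t (p i)) ^ 2 / rowMarg p i) - Smax t (colMarg p)) /
    (1 - Smax t (colMarg p))


lemma smax_bdd {n : ℕ} (t : ℕ) (q : Fin n → ℝ) :
    BddAbove ((fun T : Finset (Fin n) => ∑ j ∈ T, q j) '' {T : Finset (Fin n) | T.card = t}) :=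
  ((Set.toFinite _).image _).bddAbove

lemma le_smax {n : ℕ} {t : ℕ} (q : Fin n → ℝ) (T : Finset (Fin n)) (hT : T.card = t) :
    ∑ j ∈ T, q j ≤ Smax t q :=
  le_csSup (smax_bdd t q) ⟨T, hT, rfl⟩

lemma smax_exists {n : ℕ} {t : ℕ} (q : Fin n → ℝ) (h : t ≤ n) :
    ∃ T : Finset (Fin n), T.card = t ∧ Smax t q = ∑ j ∈ T, q j := by
  obtain ⟨T, -, hT⟩ := Finset.exists_subset_card_eq (s := (Finset.univ : Finset (Fin n))) (n := t)
    (by simpa using h)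
  have hne : ((fun T : Finset (Fin n) => ∑ j ∈ T, q j) ''
      {T : Finset (Fin n) | T.card = t}).Nonempty := ⟨_, ⟨T, hT, rfl⟩⟩
  have hmem := hne.csSup_mem ((Set.toFinite _).image _)
  obtain ⟨T', hT', hEq⟩ := hmem
  exact ⟨T', hT', hEq.symm⟩

/-- induction step — if quasi-independence holds up to level `t-1` and
`λ^{K(t)}_{Y|X} = 0`, then `S_t(p_{i·}) = p_{i+} · S_t(p_{+·})` for every row. -/
theorem lambdaKT_zero_step
    (r c : ℕ) (hr : 2 ≤ r) (hc : 2 ≤ c)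
    (p : Fin r → Fin c → ℝ) (hp : ∀ i j, 0 ≤ p i j)
    (hsum : ∑ i, ∑ j, p i j = 1)
    (hpos : ∀ i, 0 < rowMarg p i)
    (t : ℕ) (ht2 : 2 ≤ t) (htc : t < c)
    (hS : Smax t (colMarg p) ≠ 1)
    (hqi : ∀ i, ∀ k, 1 ≤ k → k ≤ t - 1 →
      Smax k (p i) = rowMarg p i * Smax k (colMarg p))
    (hK : lambdaKT t p = 0) :
    ∀ i, Smax t (p i) = rowMarg p i * Smax t (colMarg p) := by
  classical
  set S := Smax t (colMarg p) with hSdef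
  set a := fun i => Smax t (p i) with hadef
  set w := rowMarg p with hwdef
  have hw : ∀ i, 0 < w i := hpos
  have hwne : ∀ i, w i ≠ 0 := fun i => (hw i).ne'
  have hsw : ∑ i, w i = 1 := by simpa [hwdef, rowMarg] using hsum
  have hden : 1 - S ≠ 0 := fun h => hS (by linarith [sub_eq_zero.mp h])
  -- numerator zero
  have hnum : Real.sqrt (∑ i, a i ^ 2 / w i) = S := by
    unfold lambdaKT at hK
    rcases div_eq_zero_iff.mp hK with h | h
    · exact sub_eq_zero.mp h
    · exact absurd h hden
  have hS0 : 0 ≤ S := hnum ▸ Real.sqrt_nonneg _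
  have hsum2 : ∑ i, a i ^ 2 / w i = S ^ 2 := by
    have hnn : 0 ≤ ∑ i, a i ^ 2 / w i :=
      Finset.sum_nonneg fun i _ => div_nonneg (sq_nonneg _) (hw i).le
    rw [← hnum, Real.sq_sqrt hnn]
  -- superadditivity : S ≤ ∑ a
  have hSle : S ≤ ∑ i, a i := by
    obtain ⟨T0, hT0, hEq⟩ := smax_exists (colMarg p) (le_of_lt htc)
    have h1 : S = ∑ i, ∑ j ∈ T0, p i j := by
      rw [hSdef, hEq]
      rw [Finset.sum_comm]
      simp [colMarg]
    rw [h1]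
    exact Finset.sum_le_sum fun i _ => le_smax (p i) T0 hT0
  -- Cauchy–Schwarz : (∑ a)^2 ≤ S^2
  have hCS : (∑ i, a i) ^ 2 ≤ S ^ 2 := by
    have key := Finset.sum_mul_sq_le_sq_mul_sq Finset.univ
      (fun i => a i / Real.sqrt (w i)) (fun i => Real.sqrt (w i))
    have h1 : ∀ i : Fin r, a i / Real.sqrt (w i) * Real.sqrt (w i) = a i := by
      intro i
      have hne : Real.sqrt (w i) ≠ 0 := (Real.sqrt_pos.mpr (hw i)).ne'
      field_simp
    have h2 : ∀ i : Fin r, (a i / Real.sqrt (w i)) ^ 2 = a i ^ 2 / w i := by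
      intro i
      rw [div_pow, Real.sq_sqrt (hw i).le]
    have h3 : ∀ i : Fin r, (Real.sqrt (w i)) ^ 2 = w i := fun i => Real.sq_sqrt (hw i).le
    simp only [h1, h2, h3] at key
    rw [hsum2, hsw, mul_one] at key
    exact key
  have hge : ∑ i, a i ≤ S := by
    calc ∑ i, a i ≤ |∑ i, a i| := le_abs_self _
    _ = Real.sqrt ((∑ i, a i) ^ 2) := (Real.sqrt_sq_eq_abs _).symm
    _ ≤ Real.sqrt (S ^ 2) := Real.sqrt_le_sqrt hCS
    _ = S := Real.sqrt_sq hS0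
  have heq : ∑ i, a i = S := le_antisymm hge hSle
  -- the key sum of squares is zero
  have hterm : ∀ i : Fin r, (a i - w i * S) ^ 2 / w i
      = a i ^ 2 / w i - 2 * S * a i + S ^ 2 * w i := by
    intro i
    field_simp [hwne i]
    ring
  have hzero : ∑ i, (a i - w i * S) ^ 2 / w i = 0 := by
    rw [Finset.sum_congr rfl fun i _ => hterm i]
    rw [Finset.sum_add_distrib, Finset.sum_sub_distrib, ← Finset.mul_sum, ← Finset.mul_sum,
      hsum2, heq, hsw]
    ring
  intro i
  have hall := (Finset.sum_eq_zero_iff_of_nonneg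
    (fun i _ => div_nonneg (sq_nonneg _) (hw i).le)).mp hzero i (Finset.mem_univ i)
  have h2 : (a i - w i * S) ^ 2 = 0 := by
    rcases div_eq_zero_iff.mp hall with h | h
    · exact h
    · exact absurd h (hwne i)
  have := sub_eq_zero.mp (pow_eq_zero_iff (n := 2) (by norm_num) |>.mp h2)
  simpa [hadef, hwdef, hSdef] using this
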